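/- For all integers n ≥ 1 and m ≥ 1, the n-th Cauchy-Carlitz number of order m satisfies CC_n^{(m)} = Π(n) · Σ_{k=1}^{n} (−1)^k Σ_{i_1,…,i_k ≥ 1, i_1+⋯+i_k = n} M^{(m)}(i_1) ⋯ M^{(m)}(i_k), where M^{(m)}(i) = Σ (−1)^{j_1 + ⋯ + j_m}/(L_{j_1} ⋯ L_{j_m}), the latter sum being over all m-tuples of integers j_1, …, j_m ≥ 0 with r^{j_1} + ⋯ + r^{j_m} = i + m. -/

import Mathlib

open scoped Classical
open PowerSeries Finset

noncomputable section

variable (F : Type) [Field F] [Fintype F]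

/-- The rational function field `K = 𝔽_r(T)`. -/
abbrev K : Type := RatFunc F

/-- `r`, the cardinality of the finite field of constants. -/
def rr : ℕ := Fintype.card F

/-- The variable `T` of the rational function field. -/
def Tv : K F := RatFunc.X

/-- `[i] = T^{r^i} - T`. -/
def br (i : ℕ) : K F := Tv F ^ (rr F) ^ i - Tv F

/-- `D_0 = 1`, `D_i = [i] · D_{i-1}^r`. -/
def D : ℕ → K F
  | 0 => 1
  | i + 1 => br F (i + 1) * D i ^ rr F

/-- `L_0 = 1`, `L_i = [i] · L_{i-1}`. -/
def L : ℕ → K F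
  | 0 => 1
  | i + 1 => br F (i + 1) * L i

/-- The Carlitz factorial `Π(n) = ∏_j D_j^{c_j}`, where `c_j = n / r^j % r` are the
base-`r` digits of `n` (all digits with index `> n` vanish since `r ≥ 2`). -/
def Cf (n : ℕ) : K F := ∏ j ∈ Finset.range (n + 1), D F j ^ (n / (rr F) ^ j % rr F)

/-- The Carlitz logarithm `log_C(z) = Σ_{i ≥ 0} (-1)^i z^{r^i} / L_i`: the coefficient of
`z^m` is `(-1)^i / L_i` if `m = r^i` and `0` otherwise (note `i ≤ r^i = m` since `r ≥ 2`). -/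
def logC : PowerSeries (K F) :=
  PowerSeries.mk fun m =>
    ∑ i ∈ Finset.range (m + 1), if m = (rr F) ^ i then (-1 : K F) ^ i / L F i else 0

/-- The Carlitz exponential `e_C(z) = Σ_{i ≥ 0} z^{r^i} / D_i`. -/
def eC : PowerSeries (K F) :=
  PowerSeries.mk fun m =>
    ∑ i ∈ Finset.range (m + 1), if m = (rr F) ^ i then 1 / D F i else 0

/-- The power series `log_C(z)/z`. -/
def logCdivZ : PowerSeries (K F) :=
  PowerSeries.mk fun n => PowerSeries.coeff (n + 1) (logC F)

/-- The power series `e_C(z)/z`. -/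
def eCdivZ : PowerSeries (K F) :=
  PowerSeries.mk fun n => PowerSeries.coeff (n + 1) (eC F)

/-- `M^{(m)}(i) = Σ_{j_1,…,j_m ≥ 0, r^{j_1}+⋯+r^{j_m} = i+m} (-1)^{j_1+⋯+j_m}/(L_{j_1}⋯L_{j_m})`.
(Each `j_s` satisfies `j_s < r^{j_s} ≤ i + m`, so tuples drawn from `range (i+m+1)`
and filtered by the power-sum condition are exactly the tuples in question.) -/
def M (m i : ℕ) : K F :=
  ∑ j ∈ (Fintype.piFinset fun _ : Fin m => Finset.range (i + m + 1)).filter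
      (fun j => ∑ s, (rr F) ^ (j s) = i + m),
    (-1 : K F) ^ (∑ s, j s) / ∏ s, L F (j s)

lemma two_le_rr : 2 ≤ rr F := Fintype.one_lt_card

lemma lt_rpow (i : ℕ) : i < rr F ^ i := Nat.lt_pow_self (n := i) (two_le_rr F)

lemma br_ne_zero (i : ℕ) (hi : 1 ≤ i) : br F i ≠ 0 := by
  have h2 : 2 ≤ rr F ^ i := le_trans (two_le_rr F) (Nat.le_self_pow (by omega) _)
  unfold br Tv
  rw [sub_ne_zero]
  intro h
  rw [← RatFunc.algebraMap_X, ← map_pow] at h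
  have := RatFunc.algebraMap_injective F h
  have := congrArg Polynomial.natDegree this
  rw [Polynomial.natDegree_X_pow, Polynomial.natDegree_X] at this
  omega

lemma D_ne_zero (i : ℕ) : D F i ≠ 0 := by
  induction i with
  | zero => simp [D]
  | succ i ih => exact mul_ne_zero (br_ne_zero F _ (by omega)) (pow_ne_zero _ ih)

lemma L_ne_zero (i : ℕ) : L F i ≠ 0 := by
  induction i with
  | zero => simp [L]
  | succ i ih => exact mul_ne_zero (br_ne_zero F _ (by omega)) ih

lemma Cf_ne_zero (n : ℕ) : Cf F n ≠ 0 :=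
  Finset.prod_ne_zero_iff.2 fun j _ => pow_ne_zero _ (D_ne_zero F j)
lemma sum_indicator_ext (j A : ℕ) (hA : j + 1 ≤ A) :
    ∑ i ∈ range A, (if j + 1 = rr F ^ i then (-1 : K F) ^ i / L F i else 0)
      = ∑ i ∈ range (j + 1), (if j + 1 = rr F ^ i then (-1 : K F) ^ i / L F i else 0) := by
  refine (Finset.sum_subset (Finset.range_subset_range.2 hA) ?_).symm
  intro i hi hij
  rw [if_neg]
  intro hEq
  have h1 := lt_rpow F i
  have h2 : j + 1 ≤ i := by simpa using hij
  omega

lemma coeff_logCdivZ (j N : ℕ) (hN : j ≤ N) :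
    (PowerSeries.coeff j) (logCdivZ F) =
      ∑ i ∈ range (N + 1), if j + 1 = rr F ^ i then (-1 : K F) ^ i / L F i else 0 := by
  rw [logCdivZ, coeff_mk, logC, coeff_mk,
    sum_indicator_ext F j (j + 1 + 1) (by omega), sum_indicator_ext F j (N + 1) (by omega)]

/-- Coefficient of a power of a power series as a sum over bounded tuples. -/
lemma coeff_pow' (φ : PowerSeries (K F)) (k n : ℕ) :
    PowerSeries.coeff n (φ ^ k) =
      ∑ l ∈ (Fintype.piFinset fun _ : Fin k => range (n + 1)).filter
          (fun l => ∑ s, l s = n),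
        ∏ s, PowerSeries.coeff (l s) φ := by
  rw [PowerSeries.coeff_pow]
  refine Finset.sum_nbij' (fun l => fun s : Fin k => l s.val)
    (fun j => Finsupp.onFinset (range k)
      (fun i => if h : i < k then j ⟨i, h⟩ else 0)
      (fun i hi => Finset.mem_range.2 (by by_contra hik; exact hi (dif_neg (by omega)))))
    ?_ ?_ ?_ ?_ ?_
  · intro l hl
    rw [Finset.mem_finsuppAntidiag] at hl
    obtain ⟨hsum, hsupp⟩ := hl
    rw [Finset.mem_filter, Fintype.mem_piFinset]
    constructor
    · intro s
      rw [Finset.mem_range, Nat.lt_succ_iff, ← hsum]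
      exact Finset.single_le_sum (fun i _ => Nat.zero_le _) (by simp [s.isLt])
    · rw [← hsum, Fin.sum_univ_eq_sum_range (fun i => l i) k]
  · intro j hj
    rw [Finset.mem_filter, Fintype.mem_piFinset] at hj
    rw [Finset.mem_finsuppAntidiag]
    constructor
    · rw [← hj.2]
      rw [← Fin.sum_univ_eq_sum_range (fun i => Finsupp.onFinset (range k)
        (fun i => if h : i < k then j ⟨i, h⟩ else 0) _ i) k]
      refine Finset.sum_congr rfl fun s _ => ?_
      simp [Finsupp.onFinset_apply, s.isLt]
    · exact Finsupp.support_onFinset_subset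
  · intro l hl
    rw [Finset.mem_finsuppAntidiag] at hl
    ext i
    simp only [Finsupp.onFinset_apply]
    by_cases h : i < k
    · simp [h]
    · rw [dif_neg h]
      by_contra h0
      have := hl.2 (Finsupp.mem_support_iff.2 fun hz => h0 hz.symm)
      simp at this; omega
  · intro j hj
    funext s
    simp [s.isLt]
  · intro l hl
    rw [Finset.mem_finsuppAntidiag] at hl
    exact (Fin.prod_univ_eq_prod_range (fun i => PowerSeries.coeff (l i) φ) k).symm
set_option linter.unusedSectionVars false

lemma prod_ite_zero' {m : ℕ} (p : Fin m → Prop) [DecidablePred p] (f : Fin m → K F) :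
    (∏ s, if p s then f s else 0) = if ∀ s, p s then ∏ s, f s else 0 := by
  by_cases h : ∀ s, p s
  · rw [if_pos h]; exact Finset.prod_congr rfl fun s _ => if_pos (h s)
  · rw [if_neg h]
    push_neg at h
    obtain ⟨s, hs⟩ := h
    exact Finset.prod_eq_zero (Finset.mem_univ s) (if_neg hs)

lemma coeff_logCdivZ_pow (m n : ℕ) :
    PowerSeries.coeff n (logCdivZ F ^ m) = M F m n := by
  rw [coeff_pow']
  have hcoeff : ∀ l ∈ (Fintype.piFinset fun _ : Fin m => range (n + 1)).filter
      (fun l => ∑ s, l s = n),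
      (∏ s, PowerSeries.coeff (l s) (logCdivZ F)) =
      ∑ j ∈ Fintype.piFinset fun _ : Fin m => range (n + m + 1),
        ∏ s, (if l s + 1 = rr F ^ (j s) then (-1 : K F) ^ (j s) / L F (j s) else 0) := by
    intro l hl
    rw [Finset.mem_filter, Fintype.mem_piFinset] at hl
    calc ∏ s, PowerSeries.coeff (l s) (logCdivZ F)
        = ∏ s : Fin m, ∑ i ∈ range (n + m + 1),
            (if l s + 1 = rr F ^ i then (-1 : K F) ^ i / L F i else 0) :=
          Finset.prod_congr rfl fun s _ =>
            coeff_logCdivZ F (l s) (n + m) (by have := Finset.mem_range.1 (hl.1 s); omega)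
      _ = _ := Finset.prod_univ_sum _ _
  rw [Finset.sum_congr rfl hcoeff, Finset.sum_comm]
  unfold M
  rw [Finset.sum_filter]
  refine Finset.sum_congr rfl fun j hj => ?_
  -- inner sum over l of product of indicators
  have hpos : ∀ s : Fin m, 1 ≤ rr F ^ (j s) := fun s => Nat.one_le_pow _ _ (by have := two_le_rr F; omega)
  have hkey : ∀ l : Fin m → ℕ, (∀ s, l s + 1 = rr F ^ (j s)) ↔ l = fun s => rr F ^ (j s) - 1 := by
    intro l
    constructor
    · intro h; funext s; have := h s; omega
    · intro h; subst h; intro s; have := hpos s; simp; omega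
  have hstep : ∀ l : Fin m → ℕ,
      (∏ s, (if l s + 1 = rr F ^ (j s) then (-1 : K F) ^ (j s) / L F (j s) else 0)) =
      if l = (fun s => rr F ^ (j s) - 1) then ∏ s, (-1 : K F) ^ (j s) / L F (j s) else 0 := by
    intro l
    rw [prod_ite_zero' F (fun s => l s + 1 = rr F ^ (j s))]
    congr 1
    simp only [eq_iff_iff]
    exact hkey l
  rw [Finset.sum_congr rfl (fun l _ => hstep l), Finset.sum_ite_eq' _ _
    (fun _ => ∏ s, (-1 : K F) ^ (j s) / L F (j s))]
  have hsum_shift : (∑ s, (rr F ^ (j s) - 1)) + m = ∑ s : Fin m, rr F ^ (j s) := by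
    have h1 : ∑ s : Fin m, ((rr F ^ (j s) - 1) + 1) = ∑ s : Fin m, rr F ^ (j s) :=
      Finset.sum_congr rfl fun s _ => Nat.sub_add_cancel (hpos s)
    rw [Finset.sum_add_distrib] at h1
    simpa using h1
  have hcond : ((fun s => rr F ^ (j s) - 1) ∈
      (Fintype.piFinset fun _ : Fin m => range (n + 1)).filter (fun l => ∑ s, l s = n))
      ↔ (∑ s, rr F ^ (j s) = n + m) := by
    rw [Finset.mem_filter, Fintype.mem_piFinset]
    constructor
    · rintro ⟨_, h2⟩
      have h2' : (∑ s, (rr F ^ (j s) - 1)) = n := h2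
      omega
    · intro h
      have h2 : (∑ s, (rr F ^ (j s) - 1)) = n := by omega
      refine ⟨fun s => ?_, h2⟩
      rw [Finset.mem_range, Nat.lt_succ_iff]
      calc rr F ^ (j s) - 1
          ≤ ∑ t, (rr F ^ (j t) - 1) :=
            Finset.single_le_sum (f := fun t : Fin m => rr F ^ (j t) - 1)
              (fun t _ => Nat.zero_le _) (Finset.mem_univ s)
        _ = n := h2
  rw [if_congr hcond rfl rfl]
  congr 1
  rw [Finset.prod_div_distrib, Finset.prod_pow_eq_pow_sum]
lemma M_zero (m : ℕ) : M F m 0 = 1 := by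
  unfold M
  have hfe : ((Fintype.piFinset fun _ : Fin m => Finset.range (0 + m + 1)).filter
      (fun j => ∑ s, (rr F) ^ (j s) = 0 + m)) = {fun _ => 0} := by
    ext j
    rw [Finset.mem_filter, Fintype.mem_piFinset, Finset.mem_singleton]
    constructor
    · rintro ⟨_, h2⟩
      funext s
      by_contra hs
      have h1 : ∀ t : Fin m, 1 ≤ rr F ^ (j t) :=
        fun t => Nat.one_le_pow _ _ (by have := two_le_rr F; omega)
      have h2s : 2 ≤ rr F ^ (j s) := by
        calc 2 ≤ rr F := two_le_rr F
          _ = rr F ^ 1 := (pow_one _).symm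
          _ ≤ rr F ^ (j s) := Nat.pow_le_pow_right (by have := two_le_rr F; omega) (by omega)
      have hlt : ∑ t : Fin m, 1 < ∑ t : Fin m, rr F ^ (j t) :=
        Finset.sum_lt_sum (fun t _ => h1 t) ⟨s, Finset.mem_univ s, by omega⟩
      simp only [Finset.sum_const, Finset.card_univ, Fintype.card_fin, smul_eq_mul, mul_one] at hlt
      omega
    · intro h
      subst h
      refine ⟨fun s => by simp, by simp⟩
  rw [hfe, Finset.sum_singleton]
  simp [L]

lemma coeff_pow_eq_zero_of_lt (φ : PowerSeries (K F)) (h0 : PowerSeries.coeff 0 φ = 0)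
    {k n : ℕ} (h : n < k) : PowerSeries.coeff n (φ ^ k) = 0 := by
  rw [coeff_pow']
  refine Finset.sum_eq_zero fun l hl => ?_
  rw [Finset.mem_filter] at hl
  have hz : ∃ s, l s = 0 := by
    by_contra hc
    push_neg at hc
    have h1 : ∀ s : Fin k, 1 ≤ l s := fun s => Nat.one_le_iff_ne_zero.2 (hc s)
    have : ∑ s : Fin k, 1 ≤ ∑ s, l s := Finset.sum_le_sum fun s _ => h1 s
    simp only [Finset.sum_const, Finset.card_univ, Fintype.card_fin, smul_eq_mul, mul_one] at this
    omega
  obtain ⟨s, hs⟩ := hz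
  exact Finset.prod_eq_zero (Finset.mem_univ s) (by rw [hs, h0])

/-- Coefficients of powers of `G := logCdivZ ^ m - 1` count compositions weighted by `M`. -/
lemma coeff_G_pow (m n k : ℕ) (hn : 1 ≤ n) :
    PowerSeries.coeff n ((logCdivZ F ^ m - 1) ^ k) =
      ∑ i ∈ (Fintype.piFinset fun _ : Fin k => Finset.Icc 1 n).filter
          (fun i => ∑ t, i t = n),
        ∏ t, M F m (i t) := by
  have hG : ∀ j : ℕ, 1 ≤ j → PowerSeries.coeff j (logCdivZ F ^ m - 1) = M F m j := by
    intro j hj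
    rw [map_sub, coeff_logCdivZ_pow, PowerSeries.coeff_one, if_neg (by omega), sub_zero]
  have hG0 : PowerSeries.coeff 0 (logCdivZ F ^ m - 1) = 0 := by
    rw [map_sub, coeff_logCdivZ_pow, M_zero, PowerSeries.coeff_one, if_pos rfl, sub_self]
  rw [coeff_pow']
  rw [← Finset.sum_subset (s₁ := (Fintype.piFinset fun _ : Fin k => Finset.Icc 1 n).filter
      (fun l => ∑ s, l s = n)) ?sub ?vanish]
  · refine Finset.sum_congr rfl fun l hl => ?_
    rw [Finset.mem_filter, Fintype.mem_piFinset] at hl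
    refine Finset.prod_congr rfl fun s _ => hG (l s) ?_
    exact (Finset.mem_Icc.1 (hl.1 s)).1
  case sub =>
    refine Finset.filter_subset_filter _ (Fintype.piFinset_subset _ _ fun s => ?_)
    intro x hx
    rw [Finset.mem_Icc] at hx
    rw [Finset.mem_range]
    omega
  case vanish =>
    intro l hl hnl
    rw [Finset.mem_filter, Fintype.mem_piFinset] at hl hnl
    have hz : ∃ s, l s = 0 := by
      by_contra hc
      push_neg at hc
      refine hnl ⟨fun s => ?_, hl.2⟩
      rw [Finset.mem_Icc]
      have hle : l s ≤ n := by
        rw [← hl.2]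
        exact Finset.single_le_sum (fun t _ => Nat.zero_le _) (Finset.mem_univ s)
      have := hc s
      omega
    obtain ⟨s, hs⟩ := hz
    exact Finset.prod_eq_zero (Finset.mem_univ s) (by rw [hs, hG0])
/-- Proposition 6: for `n, m ≥ 1`, the Cauchy-Carlitz number of order `m` satisfies
`CC_n^{(m)} = Π(n) Σ_{k=1}^n (-1)^k Σ_{i_1,…,i_k ≥ 1, i_1+⋯+i_k = n} M^{(m)}(i_1)⋯M^{(m)}(i_k)`. -/
theorem cauchyCarlitzHigherOrder_eq_sum_over_tuples
    (CCho : ℕ → ℕ → K F)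
    (hCCho : ∀ m : ℕ,
      (PowerSeries.mk fun n => CCho m n / Cf F n) * logCdivZ F ^ m = 1)
    (n m : ℕ) (hn : 1 ≤ n) (hm : 1 ≤ m) :
    CCho m n = Cf F n * ∑ k ∈ Finset.Icc 1 n, (-1 : K F) ^ k *
      ∑ i ∈ (Fintype.piFinset fun _ : Fin k => Finset.Icc 1 n).filter
          (fun i => ∑ t, i t = n),
        ∏ t, M F m (i t) := by
  classical
  set G : PowerSeries (K F) := logCdivZ F ^ m - 1 with hGdef
  set A : PowerSeries (K F) := PowerSeries.mk fun n => CCho m n / Cf F n with hAdef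
  have hA : A * logCdivZ F ^ m = 1 := hCCho m
  set Q : PowerSeries (K F) := ∑ k ∈ range (n + 1), (-G) ^ k with hQdef
  have hgeom : Q * (logCdivZ F ^ m) = 1 - (-G) ^ (n + 1) := by
    have h := geom_sum_mul (-G) (n + 1)
    rw [hQdef, hGdef]
    rw [hGdef] at h
    linear_combination -h
  have hAQ : A - Q = (-G) ^ (n + 1) * A := by
    linear_combination Q * hA - A * hgeom
  have hG0 : PowerSeries.coeff 0 (-G) = 0 := by
    rw [hGdef, map_neg, map_sub, coeff_logCdivZ_pow, M_zero, PowerSeries.coeff_one,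
      if_pos rfl, sub_self, neg_zero]
  have hco : PowerSeries.coeff n (A - Q) = 0 := by
    rw [hAQ, PowerSeries.coeff_mul]
    refine Finset.sum_eq_zero fun p hp => ?_
    have hple : p.1 ≤ n := by
      have := Finset.HasAntidiagonal.mem_antidiagonal.1 hp
      omega
    rw [coeff_pow_eq_zero_of_lt F (-G) hG0 (by omega : p.1 < n + 1), zero_mul]
  have hcoAQ : PowerSeries.coeff n A = PowerSeries.coeff n Q := by
    rw [map_sub, sub_eq_zero] at hco
    exact hco
  have hrange : range (n + 1) = insert 0 (Finset.Icc 1 n) := by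
    ext x; simp [Finset.mem_Icc]; omega
  have hQco : PowerSeries.coeff n Q = ∑ k ∈ Finset.Icc 1 n, (-1 : K F) ^ k *
      ∑ i ∈ (Fintype.piFinset fun _ : Fin k => Finset.Icc 1 n).filter
          (fun i => ∑ t, i t = n),
        ∏ t, M F m (i t) := by
    rw [hQdef, map_sum, hrange, Finset.sum_insert (by simp)]
    have h0 : PowerSeries.coeff n ((-G) ^ 0) = 0 := by
      rw [pow_zero, PowerSeries.coeff_one, if_neg (by omega)]
    rw [h0, zero_add]
    refine Finset.sum_congr rfl fun k hk => ?_
    have hC : (-G) ^ k = PowerSeries.C ((-1 : K F) ^ k) * G ^ k := by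
      rw [neg_pow, map_pow, map_neg, map_one]
    rw [hC, PowerSeries.coeff_C_mul, hGdef, coeff_G_pow F m n k hn]
  have key : CCho m n / Cf F n = ∑ k ∈ Finset.Icc 1 n, (-1 : K F) ^ k *
      ∑ i ∈ (Fintype.piFinset fun _ : Fin k => Finset.Icc 1 n).filter
          (fun i => ∑ t, i t = n),
        ∏ t, M F m (i t) := by
    rw [← hQco, ← hcoAQ, hAdef, PowerSeries.coeff_mk]
  rw [div_eq_iff (Cf_ne_zero F n)] at key
  rw [key, mul_comm]
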